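/- Let A be a type and let α, β, γ, δ be setoids on A forming a pairwise permuting diamond M3 with bottom ⊥. Form the duplication A(γ) over γ. Then the eight setoids ⊥, η₀, α₀ ⊓ α₁, α₀ ⊓ β₁, α₀, β₀, γ₀, δ₀ on A(γ) are pairwise distinct, the set of these eight setoids is closed under ⊓ and ⊔, any two of them permute under relational composition, and they form a copy of M₃,₃: the three setoids α₀ ⊓ α₁, α₀ ⊓ β₁, η₀ have pairwise meets ⊥ and pairwise joins α₀, and the three setoids α₀, β₀, γ₀ have pairwise meets η₀ and pairwise joins δ₀. -/

import Mathlib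

/-! Common setup: the lattice `Setoid A` of equivalence relations on `A`,
the duplication `Dup β = {p : A × A // β p.1 p.2}`, the lifted setoids
`lift0 β θ = θ₀`, `lift1 β θ = θ₁`, the projection kernels `ker0 β = η₀`,
`ker1 β = η₁`, and relational composition `rc`. -/

variable {A : Type*}

/-- The duplication `A(β)`. -/
def Dup (β : Setoid A) : Type _ := {p : A × A // β.r p.1 p.2}

/-- `θ₀`: relate two elements of `A(β)` iff `θ` relates their first coordinates. -/
def lift0 (β θ : Setoid A) : Setoid (Dup β) :=
  ⟨fun x y => θ.r x.1.1 y.1.1,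
   ⟨fun _ => θ.refl' _, fun h => θ.symm' h, fun h h' => θ.trans' h h'⟩⟩

/-- `θ₁`: relate two elements of `A(β)` iff `θ` relates their second coordinates. -/
def lift1 (β θ : Setoid A) : Setoid (Dup β) :=
  ⟨fun x y => θ.r x.1.2 y.1.2,
   ⟨fun _ => θ.refl' _, fun h => θ.symm' h, fun h h' => θ.trans' h h'⟩⟩

/-- `η₀`: kernel of the first projection. -/
def ker0 (β : Setoid A) : Setoid (Dup β) :=
  ⟨fun x y => x.1.1 = y.1.1, ⟨fun _ => rfl, Eq.symm, Eq.trans⟩⟩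

/-- `η₁`: kernel of the second projection. -/
def ker1 (β : Setoid A) : Setoid (Dup β) :=
  ⟨fun x y => x.1.2 = y.1.2, ⟨fun _ => rfl, Eq.symm, Eq.trans⟩⟩

/-- Relational composition. -/
def rc {B : Type*} (r s : B → B → Prop) : B → B → Prop :=
  fun a b => ∃ c, r a c ∧ s c b

/-- `α, β, γ, δ` form a diamond `M₃` with bottom `⊥` in `Setoid A`. -/
def IsM3 (α β γ δ : Setoid A) : Prop :=
  α ⊓ β = ⊥ ∧ α ⊓ γ = ⊥ ∧ β ⊓ γ = ⊥ ∧
  α ⊔ β = δ ∧ α ⊔ γ = δ ∧ β ⊔ γ = δ ∧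
  α ≠ β ∧ α ≠ γ ∧ β ≠ γ ∧
  α ≠ ⊥ ∧ β ≠ ⊥ ∧ γ ≠ ⊥ ∧ α ≠ δ ∧ β ≠ δ ∧ γ ≠ δ

/-- The diamond is pairwise permuting. -/
def M3Permutes (α β γ : Setoid A) : Prop :=
  rc α.r β.r = rc β.r α.r ∧ rc α.r γ.r = rc γ.r α.r ∧
  rc β.r γ.r = rc γ.r β.r

set_option linter.deprecated false

section Helpers
variable {B : Type*}

lemma comp_le_sup {r s : Setoid B} {a b : B} (hc : rc r.r s.r a b) : (r ⊔ s).r a b := by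
  obtain ⟨c, h1, h2⟩ := hc
  exact (r ⊔ s).trans' (Setoid.le_def.mp le_sup_left h1) (Setoid.le_def.mp le_sup_right h2)

lemma sup_decomp {r s : Setoid B} (hp : rc r.r s.r = rc s.r r.r)
    (a b : B) (hab : (r ⊔ s).r a b) : rc r.r s.r a b := by
  let t : Setoid B := ⟨rc r.r s.r, ⟨fun x => ⟨x, r.refl' x, s.refl' x⟩,
    fun {x y} ⟨c, h1, h2⟩ => by
      have : rc s.r r.r y x := ⟨c, s.symm' h2, r.symm' h1⟩
      rwa [← hp] at this,
    fun {x y z} ⟨p, h1, h2⟩ ⟨q, h3, h4⟩ => by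
      have hpq : rc s.r r.r p q := ⟨y, h2, h3⟩
      rw [← hp] at hpq
      obtain ⟨m, h5, h6⟩ := hpq
      exact ⟨m, r.trans' h1 h5, s.trans' h6 h4⟩⟩⟩
  have hle : r ⊔ s ≤ t := sup_le
    (Setoid.le_def.mpr fun {x y} hxy => ⟨y, hxy, s.refl' y⟩)
    (Setoid.le_def.mpr fun {x y} hxy => ⟨x, r.refl' x, hxy⟩)
  exact Setoid.le_def.mp hle hab

lemma rc_comm_of_sub {r s : Setoid B} (hsub : ∀ a b, (r ⊔ s).r a b → rc r.r s.r a b) :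
    rc r.r s.r = rc s.r r.r := by
  have heq : ∀ a b, rc r.r s.r a b ↔ (r ⊔ s).r a b :=
    fun a b => ⟨comp_le_sup, hsub a b⟩
  funext a b
  apply propext
  constructor
  · intro hab
    have h1 : (r ⊔ s).r a b := (heq a b).mp hab
    have h2 : (r ⊔ s).r b a := (r ⊔ s).symm' h1
    obtain ⟨c, h3, h4⟩ := hsub b a h2
    exact ⟨c, s.symm' h4, r.symm' h3⟩
  · rintro ⟨c, h1, h2⟩
    have h3 : rc r.r s.r b a := ⟨c, r.symm' h2, s.symm' h1⟩
    have h4 : (r ⊔ s).r b a := (heq b a).mp h3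
    exact hsub a b ((r ⊔ s).symm' h4)

lemma rc_comm_of_le {r s : Setoid B} (hle : r ≤ s) : rc r.r s.r = rc s.r r.r := by
  funext a b
  apply propext
  constructor
  · rintro ⟨c, h1, h2⟩
    exact ⟨b, s.trans' (Setoid.le_def.mp hle h1) h2, r.refl' b⟩
  · rintro ⟨c, h1, h2⟩
    exact ⟨a, r.refl' a, s.trans' h1 (Setoid.le_def.mp hle h2)⟩

lemma nontriv {r : Setoid B} (hr : r ≠ ⊥) : ∃ a b, r.r a b ∧ a ≠ b := by
  by_contra hc
  push_neg at hc
  exact hr (Setoid.ext fun a b => ⟨fun hab => hc a b hab, fun hab => hab ▸ r.refl' a⟩)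

end Helpers

lemma lift0_inj {γ θ θ' : Setoid A} (hh : lift0 γ θ = lift0 γ θ') : θ = θ' := by
  apply Setoid.ext
  intro a b
  exact Setoid.ext_iff.mp hh ⟨(a, a), γ.refl' a⟩ ⟨(b, b), γ.refl' b⟩

lemma lift0_mono {γ : Setoid A} {θ θ' : Setoid A} (hle : θ ≤ θ') : lift0 γ θ ≤ lift0 γ θ' :=
  Setoid.le_def.mpr fun {_ _} hxy => Setoid.le_def.mp hle hxy

lemma ker0_le_lift0 {γ θ : Setoid A} : ker0 γ ≤ lift0 γ θ :=
  Setoid.le_def.mpr fun {x y} hxy => by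
    have hx : x.1.1 = y.1.1 := hxy
    show θ.r x.1.1 y.1.1
    rw [hx]


/-- Theorem 1.3: `M₃,₃` inside `Setoid (A(γ))`, Figure 6. -/
theorem M33_sublattice (α β γ δ : Setoid A) (h : IsM3 α β γ δ)
    (hperm : M3Permutes α β γ) :
    [(⊥ : Setoid (Dup γ)), ker0 γ, lift0 γ α ⊓ lift1 γ α, lift0 γ α ⊓ lift1 γ β,
      lift0 γ α, lift0 γ β, lift0 γ γ, lift0 γ δ].Pairwise (· ≠ ·) ∧
    (∀ x ∈ ({⊥, ker0 γ, lift0 γ α ⊓ lift1 γ α, lift0 γ α ⊓ lift1 γ β,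
        lift0 γ α, lift0 γ β, lift0 γ γ, lift0 γ δ} : Set (Setoid (Dup γ))),
      ∀ y ∈ ({⊥, ker0 γ, lift0 γ α ⊓ lift1 γ α, lift0 γ α ⊓ lift1 γ β,
        lift0 γ α, lift0 γ β, lift0 γ γ, lift0 γ δ} : Set (Setoid (Dup γ))),
      x ⊓ y ∈ ({⊥, ker0 γ, lift0 γ α ⊓ lift1 γ α, lift0 γ α ⊓ lift1 γ β,
        lift0 γ α, lift0 γ β, lift0 γ γ, lift0 γ δ} : Set (Setoid (Dup γ))) ∧
      x ⊔ y ∈ ({⊥, ker0 γ, lift0 γ α ⊓ lift1 γ α, lift0 γ α ⊓ lift1 γ β,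
        lift0 γ α, lift0 γ β, lift0 γ γ, lift0 γ δ} : Set (Setoid (Dup γ)))) ∧
    (∀ x ∈ ({⊥, ker0 γ, lift0 γ α ⊓ lift1 γ α, lift0 γ α ⊓ lift1 γ β,
        lift0 γ α, lift0 γ β, lift0 γ γ, lift0 γ δ} : Set (Setoid (Dup γ))),
      ∀ y ∈ ({⊥, ker0 γ, lift0 γ α ⊓ lift1 γ α, lift0 γ α ⊓ lift1 γ β,
        lift0 γ α, lift0 γ β, lift0 γ γ, lift0 γ δ} : Set (Setoid (Dup γ))),
      rc x.r y.r = rc y.r x.r) ∧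
    IsM3 (lift0 γ α ⊓ lift1 γ α) (lift0 γ α ⊓ lift1 γ β) (ker0 γ) (lift0 γ α) ∧
    (lift0 γ α ⊓ lift0 γ β = ker0 γ ∧ lift0 γ α ⊓ lift0 γ γ = ker0 γ ∧
      lift0 γ β ⊓ lift0 γ γ = ker0 γ ∧ lift0 γ α ⊔ lift0 γ β = lift0 γ δ ∧
      lift0 γ α ⊔ lift0 γ γ = lift0 γ δ ∧ lift0 γ β ⊔ lift0 γ γ = lift0 γ δ) := by
  obtain ⟨mab, mac, mbc, jab, jac, jbc, nab2, nac2, nbc2, na0, nb0, nc0, nad, nbd, ncd⟩ := h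
  obtain ⟨pab, pac, pbc⟩ := hperm
  -- facts on A
  have laD : α ≤ δ := jab ▸ le_sup_left
  have lbD : β ≤ δ := jab ▸ le_sup_right
  have lcD : γ ≤ δ := jac ▸ le_sup_right
  have eqab : ∀ a b, α.r a b → β.r a b → a = b := by
    intro a b h1 h2
    have h3 : (α ⊓ β).r a b := ⟨h1, h2⟩
    rw [mab] at h3
    exact h3
  have eqac : ∀ a b, α.r a b → γ.r a b → a = b := by
    intro a b h1 h2
    have h3 : (α ⊓ γ).r a b := ⟨h1, h2⟩
    rw [mac] at h3
    exact h3
  have eqbc : ∀ a b, β.r a b → γ.r a b → a = b := by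
    intro a b h1 h2
    have h3 : (β ⊓ γ).r a b := ⟨h1, h2⟩
    rw [mbc] at h3
    exact h3
  have dab : ∀ a b, δ.r a b → rc α.r β.r a b := fun a b hd =>
    sup_decomp pab a b (by rw [jab]; exact hd)
  have dac : ∀ a b, δ.r a b → rc α.r γ.r a b := fun a b hd =>
    sup_decomp pac a b (by rw [jac]; exact hd)
  have dbc : ∀ a b, δ.r a b → rc β.r γ.r a b := fun a b hd =>
    sup_decomp pbc a b (by rw [jbc]; exact hd)
  have dca : ∀ a b, δ.r a b → rc γ.r α.r a b := fun a b hd => pac ▸ dac a b hd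
  have dcb : ∀ a b, δ.r a b → rc γ.r β.r a b := fun a b hd => pbc ▸ dbc a b hd
  -- order facts on Dup γ
  have l14 : ker0 γ ≤ lift0 γ α := ker0_le_lift0
  have l15 : ker0 γ ≤ lift0 γ β := ker0_le_lift0
  have l16 : ker0 γ ≤ lift0 γ γ := ker0_le_lift0
  have l17 : ker0 γ ≤ lift0 γ δ := ker0_le_lift0
  have l24 : lift0 γ α ⊓ lift1 γ α ≤ lift0 γ α := inf_le_left
  have l34 : lift0 γ α ⊓ lift1 γ β ≤ lift0 γ α := inf_le_left
  have l47 : lift0 γ α ≤ lift0 γ δ := lift0_mono laD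
  have l57 : lift0 γ β ≤ lift0 γ δ := lift0_mono lbD
  have l67 : lift0 γ γ ≤ lift0 γ δ := lift0_mono lcD
  have l27 : lift0 γ α ⊓ lift1 γ α ≤ lift0 γ δ := le_trans l24 l47
  have l37 : lift0 γ α ⊓ lift1 γ β ≤ lift0 γ δ := le_trans l34 l47
  -- semantic meets
  have M12 : ker0 γ ⊓ (lift0 γ α ⊓ lift1 γ α) = ⊥ := by
    apply Setoid.ext
    intro x y
    constructor
    · rintro ⟨h1, h2, h3⟩
      have h1' : x.1.1 = y.1.1 := h1
      have h3' : α.r x.1.2 y.1.2 := h3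
      have hg : γ.r x.1.2 y.1.2 := γ.trans' (γ.symm' x.2) (by rw [h1']; exact y.2)
      exact Subtype.ext (Prod.ext h1' (eqac _ _ h3' hg))
    · rintro rfl
      exact ⟨rfl, α.refl' _, α.refl' _⟩
  have M13 : ker0 γ ⊓ (lift0 γ α ⊓ lift1 γ β) = ⊥ := by
    apply Setoid.ext
    intro x y
    constructor
    · rintro ⟨h1, h2, h3⟩
      have h1' : x.1.1 = y.1.1 := h1
      have h3' : β.r x.1.2 y.1.2 := h3
      have hg : γ.r x.1.2 y.1.2 := γ.trans' (γ.symm' x.2) (by rw [h1']; exact y.2)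
      exact Subtype.ext (Prod.ext h1' (eqbc _ _ h3' hg))
    · rintro rfl
      exact ⟨rfl, α.refl' _, β.refl' _⟩
  have M23 : (lift0 γ α ⊓ lift1 γ α) ⊓ (lift0 γ α ⊓ lift1 γ β) = ⊥ := by
    apply Setoid.ext
    intro x y
    constructor
    · rintro ⟨⟨h1, h2⟩, h3, h4⟩
      have h1' : α.r x.1.1 y.1.1 := h1
      have h2' : α.r x.1.2 y.1.2 := h2
      have h4' : β.r x.1.2 y.1.2 := h4
      have hx2 : x.1.2 = y.1.2 := eqab _ _ h2' h4'
      have hg : γ.r x.1.1 y.1.1 := γ.trans' x.2 (by rw [hx2]; exact γ.symm' y.2)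
      exact Subtype.ext (Prod.ext (eqac _ _ h1' hg) hx2)
    · rintro rfl
      exact ⟨⟨α.refl' _, α.refl' _⟩, α.refl' _, β.refl' _⟩
  have M45 : lift0 γ α ⊓ lift0 γ β = ker0 γ := by
    apply Setoid.ext
    intro x y
    constructor
    · rintro ⟨h1, h2⟩
      have h1' : α.r x.1.1 y.1.1 := h1
      have h2' : β.r x.1.1 y.1.1 := h2
      exact eqab _ _ h1' h2'
    · intro h1
      have h1' : x.1.1 = y.1.1 := h1
      constructor
      · show α.r x.1.1 y.1.1
        rw [h1']
      · show β.r x.1.1 y.1.1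
        rw [h1']
  have M46 : lift0 γ α ⊓ lift0 γ γ = ker0 γ := by
    apply Setoid.ext
    intro x y
    constructor
    · rintro ⟨h1, h2⟩
      have h1' : α.r x.1.1 y.1.1 := h1
      have h2' : γ.r x.1.1 y.1.1 := h2
      exact eqac _ _ h1' h2'
    · intro h1
      have h1' : x.1.1 = y.1.1 := h1
      constructor
      · show α.r x.1.1 y.1.1
        rw [h1']
      · show γ.r x.1.1 y.1.1
        rw [h1']
  have M56 : lift0 γ β ⊓ lift0 γ γ = ker0 γ := by
    apply Setoid.ext
    intro x y
    constructor
    · rintro ⟨h1, h2⟩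
      have h1' : β.r x.1.1 y.1.1 := h1
      have h2' : γ.r x.1.1 y.1.1 := h2
      exact eqbc _ _ h1' h2'
    · intro h1
      have h1' : x.1.1 = y.1.1 := h1
      constructor
      · show β.r x.1.1 y.1.1
        rw [h1']
      · show γ.r x.1.1 y.1.1
        rw [h1']
  -- decomposition of joins into compositions
  have s12 : ∀ u v : Dup γ, (lift0 γ α).r u v →
      rc (ker0 γ).r (lift0 γ α ⊓ lift1 γ α).r u v := by
    intro u v huv
    have h1 : α.r u.1.1 v.1.1 := huv
    have hd : δ.r u.1.1 v.1.2 :=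
      δ.trans' (Setoid.le_def.mp laD h1) (Setoid.le_def.mp lcD v.2)
    obtain ⟨z2, hg, ha⟩ := dca u.1.1 v.1.2 hd
    exact ⟨⟨(u.1.1, z2), hg⟩, rfl, h1, ha⟩
  have s13 : ∀ u v : Dup γ, (lift0 γ α).r u v →
      rc (ker0 γ).r (lift0 γ α ⊓ lift1 γ β).r u v := by
    intro u v huv
    have h1 : α.r u.1.1 v.1.1 := huv
    have hd : δ.r u.1.1 v.1.2 :=
      δ.trans' (Setoid.le_def.mp laD h1) (Setoid.le_def.mp lcD v.2)
    obtain ⟨z2, hg, hb⟩ := dcb u.1.1 v.1.2 hd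
    exact ⟨⟨(u.1.1, z2), hg⟩, rfl, h1, hb⟩
  have s23 : ∀ u v : Dup γ, (lift0 γ α).r u v →
      rc (lift0 γ α ⊓ lift1 γ α).r (lift0 γ α ⊓ lift1 γ β).r u v := by
    intro u v huv
    have h1 : α.r u.1.1 v.1.1 := huv
    have hd1 : δ.r u.1.2 v.1.2 :=
      δ.trans' (δ.trans' (Setoid.le_def.mp lcD (γ.symm' u.2)) (Setoid.le_def.mp laD h1))
        (Setoid.le_def.mp lcD v.2)
    obtain ⟨w, haw, hbw⟩ := dab u.1.2 v.1.2 hd1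
    have hd2 : δ.r v.1.1 w :=
      δ.trans' (Setoid.le_def.mp lcD v.2) (Setoid.le_def.mp lbD (β.symm' hbw))
    obtain ⟨z1, haz, hgz⟩ := dac v.1.1 w hd2
    exact ⟨⟨(z1, w), hgz⟩, ⟨α.trans' h1 haz, haw⟩, α.symm' haz, hbw⟩
  have s45 : ∀ u v : Dup γ, (lift0 γ δ).r u v →
      rc (lift0 γ α).r (lift0 γ β).r u v := by
    intro u v huv
    have hd : δ.r u.1.1 v.1.1 := huv
    obtain ⟨c, ha, hb⟩ := dab _ _ hd
    exact ⟨⟨(c, c), γ.refl' c⟩, ha, hb⟩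
  have s46 : ∀ u v : Dup γ, (lift0 γ δ).r u v →
      rc (lift0 γ α).r (lift0 γ γ).r u v := by
    intro u v huv
    have hd : δ.r u.1.1 v.1.1 := huv
    obtain ⟨c, ha, hg⟩ := dac _ _ hd
    exact ⟨⟨(c, c), γ.refl' c⟩, ha, hg⟩
  have s56 : ∀ u v : Dup γ, (lift0 γ δ).r u v →
      rc (lift0 γ β).r (lift0 γ γ).r u v := by
    intro u v huv
    have hd : δ.r u.1.1 v.1.1 := huv
    obtain ⟨c, hb, hg⟩ := dbc _ _ hd
    exact ⟨⟨(c, c), γ.refl' c⟩, hb, hg⟩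
  have s25 : ∀ u v : Dup γ, (lift0 γ δ).r u v →
      rc (lift0 γ α ⊓ lift1 γ α).r (lift0 γ β).r u v := by
    intro u v huv
    have hd : δ.r u.1.1 v.1.1 := huv
    obtain ⟨c, hac, hbc⟩ := dab _ _ hd
    have hd2 : δ.r u.1.2 c :=
      δ.trans' (Setoid.le_def.mp lcD (γ.symm' u.2)) (Setoid.le_def.mp laD hac)
    obtain ⟨z2, ha2, hg2⟩ := dac u.1.2 c hd2
    exact ⟨⟨(c, z2), γ.symm' hg2⟩, ⟨hac, ha2⟩, hbc⟩
  have s26 : ∀ u v : Dup γ, (lift0 γ δ).r u v →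
      rc (lift0 γ α ⊓ lift1 γ α).r (lift0 γ γ).r u v := by
    intro u v huv
    have hd : δ.r u.1.1 v.1.1 := huv
    obtain ⟨c, hac, hgc⟩ := dac _ _ hd
    have hd2 : δ.r u.1.2 c :=
      δ.trans' (Setoid.le_def.mp lcD (γ.symm' u.2)) (Setoid.le_def.mp laD hac)
    obtain ⟨z2, ha2, hg2⟩ := dac u.1.2 c hd2
    exact ⟨⟨(c, z2), γ.symm' hg2⟩, ⟨hac, ha2⟩, hgc⟩
  have s35 : ∀ u v : Dup γ, (lift0 γ δ).r u v →
      rc (lift0 γ α ⊓ lift1 γ β).r (lift0 γ β).r u v := by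
    intro u v huv
    have hd : δ.r u.1.1 v.1.1 := huv
    obtain ⟨c, hac, hbc⟩ := dab _ _ hd
    have hd2 : δ.r u.1.2 c :=
      δ.trans' (Setoid.le_def.mp lcD (γ.symm' u.2)) (Setoid.le_def.mp laD hac)
    obtain ⟨z2, hb2, hg2⟩ := dbc u.1.2 c hd2
    exact ⟨⟨(c, z2), γ.symm' hg2⟩, ⟨hac, hb2⟩, hbc⟩
  have s36 : ∀ u v : Dup γ, (lift0 γ δ).r u v →
      rc (lift0 γ α ⊓ lift1 γ β).r (lift0 γ γ).r u v := by
    intro u v huv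
    have hd : δ.r u.1.1 v.1.1 := huv
    obtain ⟨c, hac, hgc⟩ := dac _ _ hd
    have hd2 : δ.r u.1.2 c :=
      δ.trans' (Setoid.le_def.mp lcD (γ.symm' u.2)) (Setoid.le_def.mp laD hac)
    obtain ⟨z2, hb2, hg2⟩ := dbc u.1.2 c hd2
    exact ⟨⟨(c, z2), γ.symm' hg2⟩, ⟨hac, hb2⟩, hgc⟩
  -- semantic joins
  have J12 : ker0 γ ⊔ (lift0 γ α ⊓ lift1 γ α) = lift0 γ α :=
    le_antisymm (sup_le l14 l24) (Setoid.le_def.mpr fun {u v} huv => comp_le_sup (s12 u v huv))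
  have J13 : ker0 γ ⊔ (lift0 γ α ⊓ lift1 γ β) = lift0 γ α :=
    le_antisymm (sup_le l14 l34) (Setoid.le_def.mpr fun {u v} huv => comp_le_sup (s13 u v huv))
  have J23 : (lift0 γ α ⊓ lift1 γ α) ⊔ (lift0 γ α ⊓ lift1 γ β) = lift0 γ α :=
    le_antisymm (sup_le l24 l34) (Setoid.le_def.mpr fun {u v} huv => comp_le_sup (s23 u v huv))
  have J45 : lift0 γ α ⊔ lift0 γ β = lift0 γ δ :=
    le_antisymm (sup_le l47 l57) (Setoid.le_def.mpr fun {u v} huv => comp_le_sup (s45 u v huv))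
  have J46 : lift0 γ α ⊔ lift0 γ γ = lift0 γ δ :=
    le_antisymm (sup_le l47 l67) (Setoid.le_def.mpr fun {u v} huv => comp_le_sup (s46 u v huv))
  have J56 : lift0 γ β ⊔ lift0 γ γ = lift0 γ δ :=
    le_antisymm (sup_le l57 l67) (Setoid.le_def.mpr fun {u v} huv => comp_le_sup (s56 u v huv))
  have J25 : (lift0 γ α ⊓ lift1 γ α) ⊔ lift0 γ β = lift0 γ δ :=
    le_antisymm (sup_le l27 l57) (Setoid.le_def.mpr fun {u v} huv => comp_le_sup (s25 u v huv))
  have J26 : (lift0 γ α ⊓ lift1 γ α) ⊔ lift0 γ γ = lift0 γ δ :=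
    le_antisymm (sup_le l27 l67) (Setoid.le_def.mpr fun {u v} huv => comp_le_sup (s26 u v huv))
  have J35 : (lift0 γ α ⊓ lift1 γ β) ⊔ lift0 γ β = lift0 γ δ :=
    le_antisymm (sup_le l37 l57) (Setoid.le_def.mpr fun {u v} huv => comp_le_sup (s35 u v huv))
  have J36 : (lift0 γ α ⊓ lift1 γ β) ⊔ lift0 γ γ = lift0 γ δ :=
    le_antisymm (sup_le l37 l67) (Setoid.le_def.mpr fun {u v} huv => comp_le_sup (s36 u v huv))
  -- remaining meets (lattice algebra)
  have M25 : (lift0 γ α ⊓ lift1 γ α) ⊓ lift0 γ β = ⊥ := by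
    have h1 : (lift0 γ α ⊓ lift1 γ α) ⊓ lift0 γ β ≤ ker0 γ := by
      rw [← M45]; exact inf_le_inf_right _ l24
    have h2 : (lift0 γ α ⊓ lift1 γ α) ⊓ lift0 γ β ≤ ⊥ := by
      rw [← M12]; exact le_inf h1 inf_le_left
    exact le_bot_iff.mp h2
  have M26 : (lift0 γ α ⊓ lift1 γ α) ⊓ lift0 γ γ = ⊥ := by
    have h1 : (lift0 γ α ⊓ lift1 γ α) ⊓ lift0 γ γ ≤ ker0 γ := by
      rw [← M46]; exact inf_le_inf_right _ l24
    have h2 : (lift0 γ α ⊓ lift1 γ α) ⊓ lift0 γ γ ≤ ⊥ := by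
      rw [← M12]; exact le_inf h1 inf_le_left
    exact le_bot_iff.mp h2
  have M35 : (lift0 γ α ⊓ lift1 γ β) ⊓ lift0 γ β = ⊥ := by
    have h1 : (lift0 γ α ⊓ lift1 γ β) ⊓ lift0 γ β ≤ ker0 γ := by
      rw [← M45]; exact inf_le_inf_right _ l34
    have h2 : (lift0 γ α ⊓ lift1 γ β) ⊓ lift0 γ β ≤ ⊥ := by
      rw [← M13]; exact le_inf h1 inf_le_left
    exact le_bot_iff.mp h2
  have M36 : (lift0 γ α ⊓ lift1 γ β) ⊓ lift0 γ γ = ⊥ := by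
    have h1 : (lift0 γ α ⊓ lift1 γ β) ⊓ lift0 γ γ ≤ ker0 γ := by
      rw [← M46]; exact inf_le_inf_right _ l34
    have h2 : (lift0 γ α ⊓ lift1 γ β) ⊓ lift0 γ γ ≤ ⊥ := by
      rw [← M13]; exact le_inf h1 inf_le_left
    exact le_bot_iff.mp h2
  -- comparable meets and joins
  have M01 : (⊥ : Setoid (Dup γ)) ⊓ ker0 γ = ⊥ := bot_inf_eq _
  have M02 : (⊥ : Setoid (Dup γ)) ⊓ (lift0 γ α ⊓ lift1 γ α) = ⊥ := bot_inf_eq _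
  have M03 : (⊥ : Setoid (Dup γ)) ⊓ (lift0 γ α ⊓ lift1 γ β) = ⊥ := bot_inf_eq _
  have M04 : (⊥ : Setoid (Dup γ)) ⊓ lift0 γ α = ⊥ := bot_inf_eq _
  have M05 : (⊥ : Setoid (Dup γ)) ⊓ lift0 γ β = ⊥ := bot_inf_eq _
  have M06 : (⊥ : Setoid (Dup γ)) ⊓ lift0 γ γ = ⊥ := bot_inf_eq _
  have M07 : (⊥ : Setoid (Dup γ)) ⊓ lift0 γ δ = ⊥ := bot_inf_eq _
  have M14 : ker0 γ ⊓ lift0 γ α = ker0 γ := inf_eq_left.mpr l14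
  have M15 : ker0 γ ⊓ lift0 γ β = ker0 γ := inf_eq_left.mpr l15
  have M16 : ker0 γ ⊓ lift0 γ γ = ker0 γ := inf_eq_left.mpr l16
  have M17 : ker0 γ ⊓ lift0 γ δ = ker0 γ := inf_eq_left.mpr l17
  have M24 : (lift0 γ α ⊓ lift1 γ α) ⊓ lift0 γ α = lift0 γ α ⊓ lift1 γ α := inf_eq_left.mpr l24
  have M27 : (lift0 γ α ⊓ lift1 γ α) ⊓ lift0 γ δ = lift0 γ α ⊓ lift1 γ α := inf_eq_left.mpr l27
  have M34 : (lift0 γ α ⊓ lift1 γ β) ⊓ lift0 γ α = lift0 γ α ⊓ lift1 γ β := inf_eq_left.mpr l34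
  have M37 : (lift0 γ α ⊓ lift1 γ β) ⊓ lift0 γ δ = lift0 γ α ⊓ lift1 γ β := inf_eq_left.mpr l37
  have M47 : lift0 γ α ⊓ lift0 γ δ = lift0 γ α := inf_eq_left.mpr l47
  have M57 : lift0 γ β ⊓ lift0 γ δ = lift0 γ β := inf_eq_left.mpr l57
  have M67 : lift0 γ γ ⊓ lift0 γ δ = lift0 γ γ := inf_eq_left.mpr l67
  have J01 : (⊥ : Setoid (Dup γ)) ⊔ ker0 γ = ker0 γ := bot_sup_eq _
  have J02 : (⊥ : Setoid (Dup γ)) ⊔ (lift0 γ α ⊓ lift1 γ α) = lift0 γ α ⊓ lift1 γ α := bot_sup_eq _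
  have J03 : (⊥ : Setoid (Dup γ)) ⊔ (lift0 γ α ⊓ lift1 γ β) = lift0 γ α ⊓ lift1 γ β := bot_sup_eq _
  have J04 : (⊥ : Setoid (Dup γ)) ⊔ lift0 γ α = lift0 γ α := bot_sup_eq _
  have J05 : (⊥ : Setoid (Dup γ)) ⊔ lift0 γ β = lift0 γ β := bot_sup_eq _
  have J06 : (⊥ : Setoid (Dup γ)) ⊔ lift0 γ γ = lift0 γ γ := bot_sup_eq _
  have J07 : (⊥ : Setoid (Dup γ)) ⊔ lift0 γ δ = lift0 γ δ := bot_sup_eq _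
  have J14 : ker0 γ ⊔ lift0 γ α = lift0 γ α := sup_eq_right.mpr l14
  have J15 : ker0 γ ⊔ lift0 γ β = lift0 γ β := sup_eq_right.mpr l15
  have J16 : ker0 γ ⊔ lift0 γ γ = lift0 γ γ := sup_eq_right.mpr l16
  have J17 : ker0 γ ⊔ lift0 γ δ = lift0 γ δ := sup_eq_right.mpr l17
  have J24 : (lift0 γ α ⊓ lift1 γ α) ⊔ lift0 γ α = lift0 γ α := sup_eq_right.mpr l24
  have J27 : (lift0 γ α ⊓ lift1 γ α) ⊔ lift0 γ δ = lift0 γ δ := sup_eq_right.mpr l27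
  have J34 : (lift0 γ α ⊓ lift1 γ β) ⊔ lift0 γ α = lift0 γ α := sup_eq_right.mpr l34
  have J37 : (lift0 γ α ⊓ lift1 γ β) ⊔ lift0 γ δ = lift0 γ δ := sup_eq_right.mpr l37
  have J47 : lift0 γ α ⊔ lift0 γ δ = lift0 γ δ := sup_eq_right.mpr l47
  have J57 : lift0 γ β ⊔ lift0 γ δ = lift0 γ δ := sup_eq_right.mpr l57
  have J67 : lift0 γ γ ⊔ lift0 γ δ = lift0 γ δ := sup_eq_right.mpr l67
  -- permutability facts
  have P01 : rc (⊥ : Setoid (Dup γ)).r (ker0 γ).r = rc (ker0 γ).r (⊥ : Setoid (Dup γ)).r := rc_comm_of_le bot_le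
  have P02 : rc (⊥ : Setoid (Dup γ)).r (lift0 γ α ⊓ lift1 γ α).r = rc (lift0 γ α ⊓ lift1 γ α).r (⊥ : Setoid (Dup γ)).r := rc_comm_of_le bot_le
  have P03 : rc (⊥ : Setoid (Dup γ)).r (lift0 γ α ⊓ lift1 γ β).r = rc (lift0 γ α ⊓ lift1 γ β).r (⊥ : Setoid (Dup γ)).r := rc_comm_of_le bot_le
  have P04 : rc (⊥ : Setoid (Dup γ)).r (lift0 γ α).r = rc (lift0 γ α).r (⊥ : Setoid (Dup γ)).r := rc_comm_of_le bot_le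
  have P05 : rc (⊥ : Setoid (Dup γ)).r (lift0 γ β).r = rc (lift0 γ β).r (⊥ : Setoid (Dup γ)).r := rc_comm_of_le bot_le
  have P06 : rc (⊥ : Setoid (Dup γ)).r (lift0 γ γ).r = rc (lift0 γ γ).r (⊥ : Setoid (Dup γ)).r := rc_comm_of_le bot_le
  have P07 : rc (⊥ : Setoid (Dup γ)).r (lift0 γ δ).r = rc (lift0 γ δ).r (⊥ : Setoid (Dup γ)).r := rc_comm_of_le bot_le
  have P14 : rc (ker0 γ).r (lift0 γ α).r = rc (lift0 γ α).r (ker0 γ).r := rc_comm_of_le l14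
  have P15 : rc (ker0 γ).r (lift0 γ β).r = rc (lift0 γ β).r (ker0 γ).r := rc_comm_of_le l15
  have P16 : rc (ker0 γ).r (lift0 γ γ).r = rc (lift0 γ γ).r (ker0 γ).r := rc_comm_of_le l16
  have P17 : rc (ker0 γ).r (lift0 γ δ).r = rc (lift0 γ δ).r (ker0 γ).r := rc_comm_of_le l17
  have P24 : rc (lift0 γ α ⊓ lift1 γ α).r (lift0 γ α).r = rc (lift0 γ α).r (lift0 γ α ⊓ lift1 γ α).r := rc_comm_of_le l24
  have P27 : rc (lift0 γ α ⊓ lift1 γ α).r (lift0 γ δ).r = rc (lift0 γ δ).r (lift0 γ α ⊓ lift1 γ α).r := rc_comm_of_le l27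
  have P34 : rc (lift0 γ α ⊓ lift1 γ β).r (lift0 γ α).r = rc (lift0 γ α).r (lift0 γ α ⊓ lift1 γ β).r := rc_comm_of_le l34
  have P37 : rc (lift0 γ α ⊓ lift1 γ β).r (lift0 γ δ).r = rc (lift0 γ δ).r (lift0 γ α ⊓ lift1 γ β).r := rc_comm_of_le l37
  have P47 : rc (lift0 γ α).r (lift0 γ δ).r = rc (lift0 γ δ).r (lift0 γ α).r := rc_comm_of_le l47
  have P57 : rc (lift0 γ β).r (lift0 γ δ).r = rc (lift0 γ δ).r (lift0 γ β).r := rc_comm_of_le l57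
  have P67 : rc (lift0 γ γ).r (lift0 γ δ).r = rc (lift0 γ δ).r (lift0 γ γ).r := rc_comm_of_le l67
  have P12 : rc (ker0 γ).r (lift0 γ α ⊓ lift1 γ α).r = rc (lift0 γ α ⊓ lift1 γ α).r (ker0 γ).r :=
    rc_comm_of_sub fun a b hab => s12 a b (by rw [J12] at hab; exact hab)
  have P13 : rc (ker0 γ).r (lift0 γ α ⊓ lift1 γ β).r = rc (lift0 γ α ⊓ lift1 γ β).r (ker0 γ).r :=
    rc_comm_of_sub fun a b hab => s13 a b (by rw [J13] at hab; exact hab)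
  have P23 : rc (lift0 γ α ⊓ lift1 γ α).r (lift0 γ α ⊓ lift1 γ β).r = rc (lift0 γ α ⊓ lift1 γ β).r (lift0 γ α ⊓ lift1 γ α).r :=
    rc_comm_of_sub fun a b hab => s23 a b (by rw [J23] at hab; exact hab)
  have P45 : rc (lift0 γ α).r (lift0 γ β).r = rc (lift0 γ β).r (lift0 γ α).r :=
    rc_comm_of_sub fun a b hab => s45 a b (by rw [J45] at hab; exact hab)
  have P46 : rc (lift0 γ α).r (lift0 γ γ).r = rc (lift0 γ γ).r (lift0 γ α).r :=
    rc_comm_of_sub fun a b hab => s46 a b (by rw [J46] at hab; exact hab)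
  have P56 : rc (lift0 γ β).r (lift0 γ γ).r = rc (lift0 γ γ).r (lift0 γ β).r :=
    rc_comm_of_sub fun a b hab => s56 a b (by rw [J56] at hab; exact hab)
  have P25 : rc (lift0 γ α ⊓ lift1 γ α).r (lift0 γ β).r = rc (lift0 γ β).r (lift0 γ α ⊓ lift1 γ α).r :=
    rc_comm_of_sub fun a b hab => s25 a b (by rw [J25] at hab; exact hab)
  have P26 : rc (lift0 γ α ⊓ lift1 γ α).r (lift0 γ γ).r = rc (lift0 γ γ).r (lift0 γ α ⊓ lift1 γ α).r :=
    rc_comm_of_sub fun a b hab => s26 a b (by rw [J26] at hab; exact hab)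
  have P35 : rc (lift0 γ α ⊓ lift1 γ β).r (lift0 γ β).r = rc (lift0 γ β).r (lift0 γ α ⊓ lift1 γ β).r :=
    rc_comm_of_sub fun a b hab => s35 a b (by rw [J35] at hab; exact hab)
  have P36 : rc (lift0 γ α ⊓ lift1 γ β).r (lift0 γ γ).r = rc (lift0 γ γ).r (lift0 γ α ⊓ lift1 γ β).r :=
    rc_comm_of_sub fun a b hab => s36 a b (by rw [J36] at hab; exact hab)
  -- distinctness
  have n01 : (⊥ : Setoid (Dup γ)) ≠ ker0 γ := by
    intro hh
    obtain ⟨a, b, hab, hne⟩ := nontriv nc0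
    have hx : (ker0 γ).r ⟨(a, a), γ.refl' a⟩ ⟨(a, b), hab⟩ := rfl
    rw [← hh] at hx
    have hxy : (⟨(a, a), γ.refl' a⟩ : Dup γ) = ⟨(a, b), hab⟩ := hx
    exact hne (congrArg (fun t => t.1.2) hxy)
  have n02 : (⊥ : Setoid (Dup γ)) ≠ lift0 γ α ⊓ lift1 γ α := by
    intro hh
    obtain ⟨a, b, hab, hne⟩ := nontriv na0
    have hx : (lift0 γ α ⊓ lift1 γ α).r ⟨(a, a), γ.refl' a⟩ ⟨(b, b), γ.refl' b⟩ := ⟨hab, hab⟩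
    rw [← hh] at hx
    have hxy : (⟨(a, a), γ.refl' a⟩ : Dup γ) = ⟨(b, b), γ.refl' b⟩ := hx
    exact hne (congrArg (fun t => t.1.1) hxy)
  have n03 : (⊥ : Setoid (Dup γ)) ≠ lift0 γ α ⊓ lift1 γ β := by
    intro hh
    obtain ⟨a, b, hab, hne⟩ := nontriv na0
    obtain ⟨c, hbc, hgc⟩ := dbc a b (Setoid.le_def.mp laD hab)
    have hx : (lift0 γ α ⊓ lift1 γ β).r ⟨(a, a), γ.refl' a⟩ ⟨(b, c), γ.symm' hgc⟩ := ⟨hab, hbc⟩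
    rw [← hh] at hx
    have hxy : (⟨(a, a), γ.refl' a⟩ : Dup γ) = ⟨(b, c), γ.symm' hgc⟩ := hx
    exact hne (congrArg (fun t => t.1.1) hxy)
  have n04 : (⊥ : Setoid (Dup γ)) ≠ lift0 γ α := by
    intro hh
    have h1 : ker0 γ ≤ lift0 γ α := l14
    rw [← hh] at h1
    exact n01 (le_bot_iff.mp h1).symm
  have n05 : (⊥ : Setoid (Dup γ)) ≠ lift0 γ β := by
    intro hh
    have h1 : ker0 γ ≤ lift0 γ β := l15
    rw [← hh] at h1
    exact n01 (le_bot_iff.mp h1).symm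
  have n06 : (⊥ : Setoid (Dup γ)) ≠ lift0 γ γ := by
    intro hh
    have h1 : ker0 γ ≤ lift0 γ γ := l16
    rw [← hh] at h1
    exact n01 (le_bot_iff.mp h1).symm
  have n07 : (⊥ : Setoid (Dup γ)) ≠ lift0 γ δ := by
    intro hh
    have h1 : ker0 γ ≤ lift0 γ δ := l17
    rw [← hh] at h1
    exact n01 (le_bot_iff.mp h1).symm
  have n12 : ker0 γ ≠ lift0 γ α ⊓ lift1 γ α := by
    intro hh
    exact n02 (by rw [← M12, hh, inf_idem])
  have n13 : ker0 γ ≠ lift0 γ α ⊓ lift1 γ β := by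
    intro hh
    exact n03 (by rw [← M13, hh, inf_idem])
  have n23 : lift0 γ α ⊓ lift1 γ α ≠ lift0 γ α ⊓ lift1 γ β := by
    intro hh
    exact n02 (by rw [← M23, hh, inf_idem])
  have n15 : ker0 γ ≠ lift0 γ β := by
    intro hh
    obtain ⟨a, b, hab, hne⟩ := nontriv nb0
    have hx : (lift0 γ β).r ⟨(a, a), γ.refl' a⟩ ⟨(b, b), γ.refl' b⟩ := hab
    rw [← hh] at hx
    exact hne hx
  have n16 : ker0 γ ≠ lift0 γ γ := by
    intro hh
    obtain ⟨a, b, hab, hne⟩ := nontriv nc0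
    have hx : (lift0 γ γ).r ⟨(a, a), γ.refl' a⟩ ⟨(b, b), γ.refl' b⟩ := hab
    rw [← hh] at hx
    exact hne hx
  have n14 : ker0 γ ≠ lift0 γ α := by
    intro hh
    apply n02
    rw [← M12, hh, inf_comm (lift0 γ α) (lift0 γ α ⊓ lift1 γ α), M24]
  have n17 : ker0 γ ≠ lift0 γ δ := by
    intro hh
    have h1 : ker0 γ ≤ lift0 γ α := l14
    rw [hh] at h1
    exact n15 (M45.symm.trans (inf_eq_right.mpr (le_trans l57 h1)))
  have n24 : lift0 γ α ⊓ lift1 γ α ≠ lift0 γ α := by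
    intro hh
    have h1 : ker0 γ ≤ lift0 γ α := l14
    rw [← hh] at h1
    exact n01 (M12.symm.trans (inf_eq_left.mpr h1))
  have n34 : lift0 γ α ⊓ lift1 γ β ≠ lift0 γ α := by
    intro hh
    have h1 : ker0 γ ≤ lift0 γ α := l14
    rw [← hh] at h1
    exact n01 (M13.symm.trans (inf_eq_left.mpr h1))
  have n25 : lift0 γ α ⊓ lift1 γ α ≠ lift0 γ β := by
    intro hh
    have h1 : lift0 γ β ≤ lift0 γ α := by rw [← hh]; exact l24
    exact n15 (M45.symm.trans (inf_eq_right.mpr h1))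
  have n26 : lift0 γ α ⊓ lift1 γ α ≠ lift0 γ γ := by
    intro hh
    have h1 : lift0 γ γ ≤ lift0 γ α := by rw [← hh]; exact l24
    exact n16 (M46.symm.trans (inf_eq_right.mpr h1))
  have n35 : lift0 γ α ⊓ lift1 γ β ≠ lift0 γ β := by
    intro hh
    have h1 : lift0 γ β ≤ lift0 γ α := by rw [← hh]; exact l34
    exact n15 (M45.symm.trans (inf_eq_right.mpr h1))
  have n36 : lift0 γ α ⊓ lift1 γ β ≠ lift0 γ γ := by
    intro hh
    have h1 : lift0 γ γ ≤ lift0 γ α := by rw [← hh]; exact l34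
    exact n16 (M46.symm.trans (inf_eq_right.mpr h1))
  have n27 : lift0 γ α ⊓ lift1 γ α ≠ lift0 γ δ := by
    intro hh
    have h1 : lift0 γ δ ≤ lift0 γ α := by rw [← hh]; exact l24
    exact n15 (M45.symm.trans (inf_eq_right.mpr (le_trans l57 h1)))
  have n37 : lift0 γ α ⊓ lift1 γ β ≠ lift0 γ δ := by
    intro hh
    have h1 : lift0 γ δ ≤ lift0 γ α := by rw [← hh]; exact l34
    exact n15 (M45.symm.trans (inf_eq_right.mpr (le_trans l57 h1)))
  have n45 : lift0 γ α ≠ lift0 γ β := fun hh => nab2 (lift0_inj hh)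
  have n46 : lift0 γ α ≠ lift0 γ γ := fun hh => nac2 (lift0_inj hh)
  have n56 : lift0 γ β ≠ lift0 γ γ := fun hh => nbc2 (lift0_inj hh)
  have n47 : lift0 γ α ≠ lift0 γ δ := fun hh => nad (lift0_inj hh)
  have n57 : lift0 γ β ≠ lift0 γ δ := fun hh => nbd (lift0_inj hh)
  have n67 : lift0 γ γ ≠ lift0 γ δ := fun hh => ncd (lift0_inj hh)
  refine ⟨?_, ?_, ?_, ?_, M45, M46, M56, J45, J46, J56⟩
  · -- pairwise distinct
    refine List.Pairwise.cons ?_ (List.Pairwise.cons ?_ (List.Pairwise.cons ?_ (List.Pairwise.cons ?_ (List.Pairwise.cons ?_ (List.Pairwise.cons ?_ (List.Pairwise.cons ?_ (List.Pairwise.cons ?_ List.Pairwise.nil)))))))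
    · intro z hz
      simp only [List.mem_cons, List.not_mem_nil, or_false] at hz
      rcases hz with rfl | rfl | rfl | rfl | rfl | rfl | rfl
      exacts [n01, n02, n03, n04, n05, n06, n07]
    · intro z hz
      simp only [List.mem_cons, List.not_mem_nil, or_false] at hz
      rcases hz with rfl | rfl | rfl | rfl | rfl | rfl
      exacts [n12, n13, n14, n15, n16, n17]
    · intro z hz
      simp only [List.mem_cons, List.not_mem_nil, or_false] at hz
      rcases hz with rfl | rfl | rfl | rfl | rfl
      exacts [n23, n24, n25, n26, n27]
    · intro z hz
      simp only [List.mem_cons, List.not_mem_nil, or_false] at hz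
      rcases hz with rfl | rfl | rfl | rfl
      exacts [n34, n35, n36, n37]
    · intro z hz
      simp only [List.mem_cons, List.not_mem_nil, or_false] at hz
      rcases hz with rfl | rfl | rfl
      exacts [n45, n46, n47]
    · intro z hz
      simp only [List.mem_cons, List.not_mem_nil, or_false] at hz
      rcases hz with rfl | rfl
      exacts [n56, n57]
    · intro z hz
      simp only [List.mem_cons, List.not_mem_nil, or_false] at hz
      subst hz; exact n67
    · intro z hz; exact absurd hz List.not_mem_nil
  · -- closure under meet and join
    intro x hx y hy
    simp only [Set.mem_insert_iff, Set.mem_singleton_iff] at hx hy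
    rcases hx with rfl | rfl | rfl | rfl | rfl | rfl | rfl | rfl <;>
      rcases hy with rfl | rfl | rfl | rfl | rfl | rfl | rfl | rfl
    · exact ⟨Or.inl (inf_idem (⊥ : Setoid (Dup γ))), Or.inl (sup_idem (⊥ : Setoid (Dup γ)))⟩
    · exact ⟨Or.inl (M01), Or.inr (Or.inl (J01))⟩
    · exact ⟨Or.inl (M02), Or.inr (Or.inr (Or.inl (J02)))⟩
    · exact ⟨Or.inl (M03), Or.inr (Or.inr (Or.inr (Or.inl (J03))))⟩
    · exact ⟨Or.inl (M04), Or.inr (Or.inr (Or.inr (Or.inr (Or.inl (J04)))))⟩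
    · exact ⟨Or.inl (M05), Or.inr (Or.inr (Or.inr (Or.inr (Or.inr (Or.inl (J05))))))⟩
    · exact ⟨Or.inl (M06), Or.inr (Or.inr (Or.inr (Or.inr (Or.inr (Or.inr (Or.inl (J06)))))))⟩
    · exact ⟨Or.inl (M07), Or.inr (Or.inr (Or.inr (Or.inr (Or.inr (Or.inr (Or.inr (J07)))))))⟩
    · exact ⟨Or.inl ((inf_comm (ker0 γ) (⊥ : Setoid (Dup γ))).trans M01), Or.inr (Or.inl ((sup_comm (ker0 γ) (⊥ : Setoid (Dup γ))).trans J01))⟩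
    · exact ⟨Or.inr (Or.inl (inf_idem (ker0 γ))), Or.inr (Or.inl (sup_idem (ker0 γ)))⟩
    · exact ⟨Or.inl (M12), Or.inr (Or.inr (Or.inr (Or.inr (Or.inl (J12)))))⟩
    · exact ⟨Or.inl (M13), Or.inr (Or.inr (Or.inr (Or.inr (Or.inl (J13)))))⟩
    · exact ⟨Or.inr (Or.inl (M14)), Or.inr (Or.inr (Or.inr (Or.inr (Or.inl (J14)))))⟩
    · exact ⟨Or.inr (Or.inl (M15)), Or.inr (Or.inr (Or.inr (Or.inr (Or.inr (Or.inl (J15))))))⟩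
    · exact ⟨Or.inr (Or.inl (M16)), Or.inr (Or.inr (Or.inr (Or.inr (Or.inr (Or.inr (Or.inl (J16)))))))⟩
    · exact ⟨Or.inr (Or.inl (M17)), Or.inr (Or.inr (Or.inr (Or.inr (Or.inr (Or.inr (Or.inr (J17)))))))⟩
    · exact ⟨Or.inl ((inf_comm (lift0 γ α ⊓ lift1 γ α) (⊥ : Setoid (Dup γ))).trans M02), Or.inr (Or.inr (Or.inl ((sup_comm (lift0 γ α ⊓ lift1 γ α) (⊥ : Setoid (Dup γ))).trans J02)))⟩
    · exact ⟨Or.inl ((inf_comm (lift0 γ α ⊓ lift1 γ α) (ker0 γ)).trans M12), Or.inr (Or.inr (Or.inr (Or.inr (Or.inl ((sup_comm (lift0 γ α ⊓ lift1 γ α) (ker0 γ)).trans J12)))))⟩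
    · exact ⟨Or.inr (Or.inr (Or.inl (inf_idem (lift0 γ α ⊓ lift1 γ α)))), Or.inr (Or.inr (Or.inl (sup_idem (lift0 γ α ⊓ lift1 γ α))))⟩
    · exact ⟨Or.inl (M23), Or.inr (Or.inr (Or.inr (Or.inr (Or.inl (J23)))))⟩
    · exact ⟨Or.inr (Or.inr (Or.inl (M24))), Or.inr (Or.inr (Or.inr (Or.inr (Or.inl (J24)))))⟩
    · exact ⟨Or.inl (M25), Or.inr (Or.inr (Or.inr (Or.inr (Or.inr (Or.inr (Or.inr (J25)))))))⟩
    · exact ⟨Or.inl (M26), Or.inr (Or.inr (Or.inr (Or.inr (Or.inr (Or.inr (Or.inr (J26)))))))⟩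
    · exact ⟨Or.inr (Or.inr (Or.inl (M27))), Or.inr (Or.inr (Or.inr (Or.inr (Or.inr (Or.inr (Or.inr (J27)))))))⟩
    · exact ⟨Or.inl ((inf_comm (lift0 γ α ⊓ lift1 γ β) (⊥ : Setoid (Dup γ))).trans M03), Or.inr (Or.inr (Or.inr (Or.inl ((sup_comm (lift0 γ α ⊓ lift1 γ β) (⊥ : Setoid (Dup γ))).trans J03))))⟩
    · exact ⟨Or.inl ((inf_comm (lift0 γ α ⊓ lift1 γ β) (ker0 γ)).trans M13), Or.inr (Or.inr (Or.inr (Or.inr (Or.inl ((sup_comm (lift0 γ α ⊓ lift1 γ β) (ker0 γ)).trans J13)))))⟩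
    · exact ⟨Or.inl ((inf_comm (lift0 γ α ⊓ lift1 γ β) (lift0 γ α ⊓ lift1 γ α)).trans M23), Or.inr (Or.inr (Or.inr (Or.inr (Or.inl ((sup_comm (lift0 γ α ⊓ lift1 γ β) (lift0 γ α ⊓ lift1 γ α)).trans J23)))))⟩
    · exact ⟨Or.inr (Or.inr (Or.inr (Or.inl (inf_idem (lift0 γ α ⊓ lift1 γ β))))), Or.inr (Or.inr (Or.inr (Or.inl (sup_idem (lift0 γ α ⊓ lift1 γ β)))))⟩
    · exact ⟨Or.inr (Or.inr (Or.inr (Or.inl (M34)))), Or.inr (Or.inr (Or.inr (Or.inr (Or.inl (J34)))))⟩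
    · exact ⟨Or.inl (M35), Or.inr (Or.inr (Or.inr (Or.inr (Or.inr (Or.inr (Or.inr (J35)))))))⟩
    · exact ⟨Or.inl (M36), Or.inr (Or.inr (Or.inr (Or.inr (Or.inr (Or.inr (Or.inr (J36)))))))⟩
    · exact ⟨Or.inr (Or.inr (Or.inr (Or.inl (M37)))), Or.inr (Or.inr (Or.inr (Or.inr (Or.inr (Or.inr (Or.inr (J37)))))))⟩
    · exact ⟨Or.inl ((inf_comm (lift0 γ α) (⊥ : Setoid (Dup γ))).trans M04), Or.inr (Or.inr (Or.inr (Or.inr (Or.inl ((sup_comm (lift0 γ α) (⊥ : Setoid (Dup γ))).trans J04)))))⟩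
    · exact ⟨Or.inr (Or.inl ((inf_comm (lift0 γ α) (ker0 γ)).trans M14)), Or.inr (Or.inr (Or.inr (Or.inr (Or.inl ((sup_comm (lift0 γ α) (ker0 γ)).trans J14)))))⟩
    · exact ⟨Or.inr (Or.inr (Or.inl ((inf_comm (lift0 γ α) (lift0 γ α ⊓ lift1 γ α)).trans M24))), Or.inr (Or.inr (Or.inr (Or.inr (Or.inl ((sup_comm (lift0 γ α) (lift0 γ α ⊓ lift1 γ α)).trans J24)))))⟩
    · exact ⟨Or.inr (Or.inr (Or.inr (Or.inl ((inf_comm (lift0 γ α) (lift0 γ α ⊓ lift1 γ β)).trans M34)))), Or.inr (Or.inr (Or.inr (Or.inr (Or.inl ((sup_comm (lift0 γ α) (lift0 γ α ⊓ lift1 γ β)).trans J34)))))⟩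
    · exact ⟨Or.inr (Or.inr (Or.inr (Or.inr (Or.inl (inf_idem (lift0 γ α)))))), Or.inr (Or.inr (Or.inr (Or.inr (Or.inl (sup_idem (lift0 γ α))))))⟩
    · exact ⟨Or.inr (Or.inl (M45)), Or.inr (Or.inr (Or.inr (Or.inr (Or.inr (Or.inr (Or.inr (J45)))))))⟩
    · exact ⟨Or.inr (Or.inl (M46)), Or.inr (Or.inr (Or.inr (Or.inr (Or.inr (Or.inr (Or.inr (J46)))))))⟩
    · exact ⟨Or.inr (Or.inr (Or.inr (Or.inr (Or.inl (M47))))), Or.inr (Or.inr (Or.inr (Or.inr (Or.inr (Or.inr (Or.inr (J47)))))))⟩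
    · exact ⟨Or.inl ((inf_comm (lift0 γ β) (⊥ : Setoid (Dup γ))).trans M05), Or.inr (Or.inr (Or.inr (Or.inr (Or.inr (Or.inl ((sup_comm (lift0 γ β) (⊥ : Setoid (Dup γ))).trans J05))))))⟩
    · exact ⟨Or.inr (Or.inl ((inf_comm (lift0 γ β) (ker0 γ)).trans M15)), Or.inr (Or.inr (Or.inr (Or.inr (Or.inr (Or.inl ((sup_comm (lift0 γ β) (ker0 γ)).trans J15))))))⟩
    · exact ⟨Or.inl ((inf_comm (lift0 γ β) (lift0 γ α ⊓ lift1 γ α)).trans M25), Or.inr (Or.inr (Or.inr (Or.inr (Or.inr (Or.inr (Or.inr ((sup_comm (lift0 γ β) (lift0 γ α ⊓ lift1 γ α)).trans J25)))))))⟩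
    · exact ⟨Or.inl ((inf_comm (lift0 γ β) (lift0 γ α ⊓ lift1 γ β)).trans M35), Or.inr (Or.inr (Or.inr (Or.inr (Or.inr (Or.inr (Or.inr ((sup_comm (lift0 γ β) (lift0 γ α ⊓ lift1 γ β)).trans J35)))))))⟩
    · exact ⟨Or.inr (Or.inl ((inf_comm (lift0 γ β) (lift0 γ α)).trans M45)), Or.inr (Or.inr (Or.inr (Or.inr (Or.inr (Or.inr (Or.inr ((sup_comm (lift0 γ β) (lift0 γ α)).trans J45)))))))⟩
    · exact ⟨Or.inr (Or.inr (Or.inr (Or.inr (Or.inr (Or.inl (inf_idem (lift0 γ β))))))), Or.inr (Or.inr (Or.inr (Or.inr (Or.inr (Or.inl (sup_idem (lift0 γ β)))))))⟩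
    · exact ⟨Or.inr (Or.inl (M56)), Or.inr (Or.inr (Or.inr (Or.inr (Or.inr (Or.inr (Or.inr (J56)))))))⟩
    · exact ⟨Or.inr (Or.inr (Or.inr (Or.inr (Or.inr (Or.inl (M57)))))), Or.inr (Or.inr (Or.inr (Or.inr (Or.inr (Or.inr (Or.inr (J57)))))))⟩
    · exact ⟨Or.inl ((inf_comm (lift0 γ γ) (⊥ : Setoid (Dup γ))).trans M06), Or.inr (Or.inr (Or.inr (Or.inr (Or.inr (Or.inr (Or.inl ((sup_comm (lift0 γ γ) (⊥ : Setoid (Dup γ))).trans J06)))))))⟩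
    · exact ⟨Or.inr (Or.inl ((inf_comm (lift0 γ γ) (ker0 γ)).trans M16)), Or.inr (Or.inr (Or.inr (Or.inr (Or.inr (Or.inr (Or.inl ((sup_comm (lift0 γ γ) (ker0 γ)).trans J16)))))))⟩
    · exact ⟨Or.inl ((inf_comm (lift0 γ γ) (lift0 γ α ⊓ lift1 γ α)).trans M26), Or.inr (Or.inr (Or.inr (Or.inr (Or.inr (Or.inr (Or.inr ((sup_comm (lift0 γ γ) (lift0 γ α ⊓ lift1 γ α)).trans J26)))))))⟩
    · exact ⟨Or.inl ((inf_comm (lift0 γ γ) (lift0 γ α ⊓ lift1 γ β)).trans M36), Or.inr (Or.inr (Or.inr (Or.inr (Or.inr (Or.inr (Or.inr ((sup_comm (lift0 γ γ) (lift0 γ α ⊓ lift1 γ β)).trans J36)))))))⟩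
    · exact ⟨Or.inr (Or.inl ((inf_comm (lift0 γ γ) (lift0 γ α)).trans M46)), Or.inr (Or.inr (Or.inr (Or.inr (Or.inr (Or.inr (Or.inr ((sup_comm (lift0 γ γ) (lift0 γ α)).trans J46)))))))⟩
    · exact ⟨Or.inr (Or.inl ((inf_comm (lift0 γ γ) (lift0 γ β)).trans M56)), Or.inr (Or.inr (Or.inr (Or.inr (Or.inr (Or.inr (Or.inr ((sup_comm (lift0 γ γ) (lift0 γ β)).trans J56)))))))⟩
    · exact ⟨Or.inr (Or.inr (Or.inr (Or.inr (Or.inr (Or.inr (Or.inl (inf_idem (lift0 γ γ)))))))), Or.inr (Or.inr (Or.inr (Or.inr (Or.inr (Or.inr (Or.inl (sup_idem (lift0 γ γ))))))))⟩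
    · exact ⟨Or.inr (Or.inr (Or.inr (Or.inr (Or.inr (Or.inr (Or.inl (M67))))))), Or.inr (Or.inr (Or.inr (Or.inr (Or.inr (Or.inr (Or.inr (J67)))))))⟩
    · exact ⟨Or.inl ((inf_comm (lift0 γ δ) (⊥ : Setoid (Dup γ))).trans M07), Or.inr (Or.inr (Or.inr (Or.inr (Or.inr (Or.inr (Or.inr ((sup_comm (lift0 γ δ) (⊥ : Setoid (Dup γ))).trans J07)))))))⟩
    · exact ⟨Or.inr (Or.inl ((inf_comm (lift0 γ δ) (ker0 γ)).trans M17)), Or.inr (Or.inr (Or.inr (Or.inr (Or.inr (Or.inr (Or.inr ((sup_comm (lift0 γ δ) (ker0 γ)).trans J17)))))))⟩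
    · exact ⟨Or.inr (Or.inr (Or.inl ((inf_comm (lift0 γ δ) (lift0 γ α ⊓ lift1 γ α)).trans M27))), Or.inr (Or.inr (Or.inr (Or.inr (Or.inr (Or.inr (Or.inr ((sup_comm (lift0 γ δ) (lift0 γ α ⊓ lift1 γ α)).trans J27)))))))⟩
    · exact ⟨Or.inr (Or.inr (Or.inr (Or.inl ((inf_comm (lift0 γ δ) (lift0 γ α ⊓ lift1 γ β)).trans M37)))), Or.inr (Or.inr (Or.inr (Or.inr (Or.inr (Or.inr (Or.inr ((sup_comm (lift0 γ δ) (lift0 γ α ⊓ lift1 γ β)).trans J37)))))))⟩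
    · exact ⟨Or.inr (Or.inr (Or.inr (Or.inr (Or.inl ((inf_comm (lift0 γ δ) (lift0 γ α)).trans M47))))), Or.inr (Or.inr (Or.inr (Or.inr (Or.inr (Or.inr (Or.inr ((sup_comm (lift0 γ δ) (lift0 γ α)).trans J47)))))))⟩
    · exact ⟨Or.inr (Or.inr (Or.inr (Or.inr (Or.inr (Or.inl ((inf_comm (lift0 γ δ) (lift0 γ β)).trans M57)))))), Or.inr (Or.inr (Or.inr (Or.inr (Or.inr (Or.inr (Or.inr ((sup_comm (lift0 γ δ) (lift0 γ β)).trans J57)))))))⟩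
    · exact ⟨Or.inr (Or.inr (Or.inr (Or.inr (Or.inr (Or.inr (Or.inl ((inf_comm (lift0 γ δ) (lift0 γ γ)).trans M67))))))), Or.inr (Or.inr (Or.inr (Or.inr (Or.inr (Or.inr (Or.inr ((sup_comm (lift0 γ δ) (lift0 γ γ)).trans J67)))))))⟩
    · exact ⟨Or.inr (Or.inr (Or.inr (Or.inr (Or.inr (Or.inr (Or.inr (inf_idem (lift0 γ δ)))))))), Or.inr (Or.inr (Or.inr (Or.inr (Or.inr (Or.inr (Or.inr (sup_idem (lift0 γ δ))))))))⟩
  · -- pairwise permutability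
    intro x hx y hy
    simp only [Set.mem_insert_iff, Set.mem_singleton_iff] at hx hy
    rcases hx with rfl | rfl | rfl | rfl | rfl | rfl | rfl | rfl <;>
      rcases hy with rfl | rfl | rfl | rfl | rfl | rfl | rfl | rfl
    · rfl
    · exact P01
    · exact P02
    · exact P03
    · exact P04
    · exact P05
    · exact P06
    · exact P07
    · exact (P01).symm
    · rfl
    · exact P12
    · exact P13
    · exact P14
    · exact P15
    · exact P16
    · exact P17
    · exact (P02).symm
    · exact (P12).symm
    · rfl
    · exact P23
    · exact P24
    · exact P25
    · exact P26
    · exact P27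
    · exact (P03).symm
    · exact (P13).symm
    · exact (P23).symm
    · rfl
    · exact P34
    · exact P35
    · exact P36
    · exact P37
    · exact (P04).symm
    · exact (P14).symm
    · exact (P24).symm
    · exact (P34).symm
    · rfl
    · exact P45
    · exact P46
    · exact P47
    · exact (P05).symm
    · exact (P15).symm
    · exact (P25).symm
    · exact (P35).symm
    · exact (P45).symm
    · rfl
    · exact P56
    · exact P57
    · exact (P06).symm
    · exact (P16).symm
    · exact (P26).symm
    · exact (P36).symm
    · exact (P46).symm
    · exact (P56).symm
    · rfl
    · exact P67
    · exact (P07).symm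
    · exact (P17).symm
    · exact (P27).symm
    · exact (P37).symm
    · exact (P47).symm
    · exact (P57).symm
    · exact (P67).symm
    · rfl
  · -- the upper M3
    exact ⟨M23, (inf_comm _ _).trans M12, (inf_comm _ _).trans M13,
      J23, (sup_comm _ _).trans J12, (sup_comm _ _).trans J13,
      n23, n12.symm, n13.symm, n02.symm, n03.symm, n01.symm, n24, n34, n14⟩
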